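/- Let G be a connected simple graph on a finite vertex set V, f : V → ℝ, and for v ∈ V define φ₁(v) := Σ_{u ∈ V} |f(u) − dist_G(u,v)|, where dist_G is the shortest-path distance. Let λ ≥ 0 and L := {v ∈ V : φ₁(v) ≤ λ}, and suppose L is nonempty. Suppose there exist τ : V → ℝ and constants c > 0, ρ ≥ 1 such that c·dist_G(x,y) ≤ |τ(x) − τ(y)| ≤ c·ρ·dist_G(x,y) for all x, y ∈ V. Then for every v ∈ L there is an enumeration s_1, …, s_k of L with s_1 = v and Σ_{i=1}^{k−1} dist_G(s_i, s_{i+1}) ≤ 2·ρ·λ; that is, tour_G(L) ≤ 2ρλ. -/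

import Mathlib

/-- The length, in graph distance, of a walk visiting the points of a list in order. -/
noncomputable def graphPathLen {V : Type*} (G : SimpleGraph V) (l : List V) : ℕ :=
  (l.zipWith G.dist l.tail).sum

namespace Phi1Aux

variable {V : Type*}

/-- Total τ-variation along a list. -/
noncomputable def tvar (τ : V → ℝ) (l : List V) : ℝ :=
  (l.zipWith (fun a b => |τ a - τ b|) l.tail).sum

@[simp] lemma tvar_nil (τ : V → ℝ) : tvar τ ([] : List V) = 0 := by simp [tvar]

@[simp] lemma tvar_single (τ : V → ℝ) (x : V) : tvar τ [x] = 0 := by simp [tvar]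

lemma tvar_cons_cons (τ : V → ℝ) (x y : V) (t : List V) :
    tvar τ (x :: y :: t) = |τ x - τ y| + tvar τ (y :: t) := by
  simp [tvar]

lemma gpl_cons_cons (G : SimpleGraph V) (x y : V) (t : List V) :
    graphPathLen G (x :: y :: t) = G.dist x y + graphPathLen G (y :: t) := by
  simp [graphPathLen]

lemma len_le_tvar (G : SimpleGraph V) (τ : V → ℝ) (c : ℝ)
    (h : ∀ x y : V, c * (G.dist x y : ℝ) ≤ |τ x - τ y|) :
    ∀ l : List V, c * (graphPathLen G l : ℝ) ≤ tvar τ l := by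
  intro l
  induction l with
  | nil => simp [graphPathLen]
  | cons x t ih =>
    cases t with
    | nil => simp [graphPathLen]
    | cons y t' =>
      rw [gpl_cons_cons, tvar_cons_cons]
      push_cast
      rw [mul_add]
      exact add_le_add (h x y) ih

lemma tvar_asc (τ : V → ℝ) :
    ∀ (t : List V) (x z : V), (x :: t).Pairwise (fun a b => τ a ≤ τ b) →
      (x :: t).getLast? = some z → tvar τ (x :: t) = τ z - τ x := by
  intro t
  induction t with
  | nil =>
    intro x z _ hz
    simp only [List.getLast?_singleton, Option.some.injEq] at hz
    subst hz; simp
  | cons y t' ih =>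
    intro x z hp hz
    rw [List.getLast?_cons_cons] at hz
    have hxy : τ x ≤ τ y := (List.pairwise_cons.mp hp).1 y (by simp)
    have h2 := ih y z (List.pairwise_cons.mp hp).2 hz
    rw [tvar_cons_cons, abs_of_nonpos (by linarith), h2]
    ring

lemma tvar_desc (τ : V → ℝ) :
    ∀ (t : List V) (x z : V), (x :: t).Pairwise (fun a b => τ b ≤ τ a) →
      (x :: t).getLast? = some z → tvar τ (x :: t) = τ x - τ z := by
  intro t
  induction t with
  | nil =>
    intro x z _ hz
    simp only [List.getLast?_singleton, Option.some.injEq] at hz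
    subst hz; simp
  | cons y t' ih =>
    intro x z hp hz
    rw [List.getLast?_cons_cons] at hz
    have hxy : τ y ≤ τ x := (List.pairwise_cons.mp hp).1 y (by simp)
    have h2 := ih y z (List.pairwise_cons.mp hp).2 hz
    rw [tvar_cons_cons, abs_of_nonneg (by linarith), h2]
    ring

lemma tvar_append (τ : V → ℝ) (x y : V) (b : List V) :
    ∀ a : List V, tvar τ (a ++ x :: y :: b) =
      tvar τ (a ++ [x]) + |τ x - τ y| + tvar τ (y :: b) := by
  intro a
  induction a with
  | nil => simp [tvar_cons_cons]
  | cons z a' ih =>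
    cases a' with
    | nil =>
      simp only [List.nil_append, List.cons_append] at *
      rw [tvar_cons_cons, tvar_cons_cons, tvar_cons_cons]
      simp [tvar_single]
      ring
    | cons w a'' =>
      simp only [List.cons_append] at *
      rw [tvar_cons_cons, tvar_cons_cons, ih]
      ring

end Phi1Aux

open Phi1Aux

/-- Core estimate behind the `φ₁` planning bound: if the connected graph `G` embeds
into the real line with distortion `ρ`, then the sublevel set `L = {v : φ₁(v) ≤ λ}`
admits, from every starting point of `L`, an enumeration of total graph-distance
length at most `2ρλ`; that is, `tour_G(L) ≤ 2ρλ`. -/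
theorem phi1_sublevel_tour_bound
    {V : Type*} [Fintype V] [DecidableEq V]
    (G : SimpleGraph V) (hG : G.Connected) (f : V → ℝ)
    (lam : ℝ) (hlam : 0 ≤ lam)
    (L : Finset V)
    (hL : L = Finset.univ.filter
      (fun v => ∑ u, |f u - (G.dist u v : ℝ)| ≤ lam))
    (hLne : L.Nonempty)
    (τ : V → ℝ) (c ρ : ℝ) (hc : 0 < c) (hρ : 1 ≤ ρ)
    (hemb : ∀ x y : V,
      c * (G.dist x y : ℝ) ≤ |τ x - τ y| ∧ |τ x - τ y| ≤ c * ρ * (G.dist x y : ℝ)) :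
    ∀ v ∈ L, ∃ l : List V, l.Nodup ∧ l.toFinset = L ∧ l.head? = some v ∧
      (graphPathLen G l : ℝ) ≤ 2 * ρ * lam := by
  classical
  intro v hv
  have hρ0 : (0:ℝ) ≤ ρ := le_trans zero_le_one hρ
  have hmemL : ∀ x : V, x ∈ L ↔ ∑ u, |f u - (G.dist u x : ℝ)| ≤ lam := by
    intro x; rw [hL]; simp
  -- diameter bound on L
  have hdistL : ∀ u ∈ L, ∀ w ∈ L, (G.dist u w : ℝ) ≤ lam := by
    intro u hu w hw
    by_cases huw : u = w
    · subst huw; simp [SimpleGraph.dist_self]; exact hlam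
    · have hφu := (hmemL u).mp hu
      have hφw := (hmemL w).mp hw
      set d : ℝ := (G.dist u w : ℝ) with hd
      have epu : ∑ x ∈ ({u, w} : Finset V), |f x - (G.dist x u : ℝ)| =
          |f u - (G.dist u u : ℝ)| + |f w - (G.dist w u : ℝ)| :=
        Finset.sum_pair huw
      have epw : ∑ x ∈ ({u, w} : Finset V), |f x - (G.dist x w : ℝ)| =
          |f u - (G.dist u w : ℝ)| + |f w - (G.dist w w : ℝ)| :=
        Finset.sum_pair huw
      have hpu : |f u - (G.dist u u : ℝ)| + |f w - (G.dist w u : ℝ)| ≤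
          ∑ x, |f x - (G.dist x u : ℝ)| := by
        rw [← epu]
        apply Finset.sum_le_sum_of_subset_of_nonneg (Finset.subset_univ _)
        intro i _ _; positivity
      have hpw : |f u - (G.dist u w : ℝ)| + |f w - (G.dist w w : ℝ)| ≤
          ∑ x, |f x - (G.dist x w : ℝ)| := by
        rw [← epw]
        apply Finset.sum_le_sum_of_subset_of_nonneg (Finset.subset_univ _)
        intro i _ _; positivity
      simp only [SimpleGraph.dist_self] at hpu hpw
      rw [SimpleGraph.dist_comm (u := w) (v := u)] at hpu
      have h1 : d ≤ |f u| + |f u - d| := by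
        have := abs_add_le (f u) (d - f u)
        have h2 : |d - f u| = |f u - d| := abs_sub_comm _ _
        have h3 : d ≤ |d| := le_abs_self d
        have h4 : f u + (d - f u) = d := by ring
        rw [h4, h2] at this
        linarith
      have h1' : d ≤ |f w| + |f w - d| := by
        have := abs_add_le (f w) (d - f w)
        have h2 : |d - f w| = |f w - d| := abs_sub_comm _ _
        have h3 : d ≤ |d| := le_abs_self d
        have h4 : f w + (d - f w) = d := by ring
        rw [h4, h2] at this
        linarith
      simp only [Nat.cast_zero, sub_zero, ← hd] at hpu hpw
      linarith
  have hτL : ∀ u ∈ L, ∀ w ∈ L, |τ u - τ w| ≤ c * ρ * lam := by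
    intro u hu w hw
    calc |τ u - τ w| ≤ c * ρ * (G.dist u w : ℝ) := (hemb u w).2
      _ ≤ c * ρ * lam := by
          apply mul_le_mul_of_nonneg_left (hdistL u hu w hw) (by positivity)
  have hinj : Function.Injective τ := by
    intro x y h
    have h1 := (hemb x y).1
    have h0 : |τ x - τ y| = 0 := by rw [h]; simp
    rw [h0] at h1
    have : (G.dist x y : ℝ) = 0 := by
      have : (0:ℝ) ≤ (G.dist x y : ℝ) := by positivity
      nlinarith
    have hdz : G.dist x y = 0 := by exact_mod_cast this
    exact hG.dist_eq_zero_iff.mp hdz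
  -- sorting setup
  set r : V → V → Prop := fun a b => τ a ≤ τ b with hr
  haveI : DecidableRel r := Classical.decRel r
  haveI : IsTrans V r := ⟨fun a b c hab hbc => le_trans hab hbc⟩
  haveI : IsTotal V r := ⟨fun a b => le_total _ _⟩
  haveI : IsAntisymm V r := ⟨fun a b hab hba => hinj (le_antisymm hab hba)⟩
  set A : Finset V := L.filter (fun x => τ x ≤ τ v) with hA
  set B : Finset V := L.filter (fun x => ¬ τ x ≤ τ v) with hB
  set lA := A.sort r with hlA
  set lB := B.sort r with hlB
  have hmemlA : ∀ x, x ∈ lA ↔ x ∈ A := fun x => Finset.mem_sort r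
  have hmemlB : ∀ x, x ∈ lB ↔ x ∈ B := fun x => Finset.mem_sort r
  have hvA : v ∈ A := by simp [hA, hv]
  have hAL : ∀ x ∈ A, x ∈ L := fun x hx => (Finset.mem_filter.mp hx).1
  have hBL : ∀ x ∈ B, x ∈ L := fun x hx => (Finset.mem_filter.mp hx).1
  have hlAne : lA ≠ [] := by
    intro hnil
    have := (hmemlA v).mpr hvA
    rw [hnil] at this
    simp at this
  -- the last element of lA is v
  have hglA : lA.getLast hlAne = v := by
    have hmem : lA.getLast hlAne ∈ lA := List.getLast_mem hlAne
    have h1 : τ (lA.getLast hlAne) ≤ τ v :=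
      (Finset.mem_filter.mp ((hmemlA _).mp hmem)).2
    have h2 : τ v ≤ τ (lA.getLast hlAne) := by
      have hsort : lA.Pairwise r := Finset.pairwise_sort A r
      have hsplit : lA.dropLast ++ [lA.getLast hlAne] = lA :=
        List.dropLast_append_getLast hlAne
      have hvlA : v ∈ lA := (hmemlA v).mpr hvA
      rw [← hsplit] at hvlA hsort
      rw [List.pairwise_append] at hsort
      rcases List.mem_append.mp hvlA with h | h
      · exact hsort.2.2 v h _ (by simp)
      · simp at h; rw [h]
    exact hinj (le_antisymm h1 h2)
  have hrev : lA.reverse = v :: lA.dropLast.reverse := by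
    conv_lhs => rw [← List.dropLast_append_getLast hlAne, hglA]
    rw [List.reverse_append]
    simp
  -- head element of lA
  obtain ⟨m, tA, hmA⟩ : ∃ m tA, lA = m :: tA := by
    cases h : lA with
    | nil => exact absurd h hlAne
    | cons m tA => exact ⟨m, tA, rfl⟩
  have hmL : m ∈ L := hAL m ((hmemlA m).mp (by rw [hmA]; simp))
  have hmv : τ m ≤ τ v :=
    (Finset.mem_filter.mp ((hmemlA m).mp (by rw [hmA]; simp))).2
  -- descending pairwise on lA.reverse
  have hdesc : lA.reverse.Pairwise (fun a b => τ b ≤ τ a) := by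
    rw [List.pairwise_reverse]
    exact Finset.pairwise_sort A r
  have hglrev : lA.reverse.getLast? = some m := by
    rw [List.getLast?_reverse, hmA]
    rfl
  -- value of tvar on the reversed ascending list
  have htvarA : tvar τ lA.reverse = τ v - τ m := by
    rw [hrev] at hdesc hglrev ⊢
    exact tvar_desc τ _ v m hdesc hglrev
  -- the candidate list
  refine ⟨lA.reverse ++ lB, ?_, ?_, ?_, ?_⟩
  · -- Nodup
    rw [List.nodup_append]
    refine ⟨List.nodup_reverse.mpr (Finset.sort_nodup A r), Finset.sort_nodup B r, ?_⟩
    intro a ha b hb hab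
    subst hab
    have haA : a ∈ A := (hmemlA a).mp (List.mem_reverse.mp ha)
    have haB : a ∈ B := (hmemlB a).mp hb
    exact (Finset.mem_filter.mp haB).2 (Finset.mem_filter.mp haA).2
  · -- toFinset
    rw [List.toFinset_append, List.toFinset_reverse, Finset.sort_toFinset,
      Finset.sort_toFinset, hA, hB]
    exact Finset.filter_union_filter_not_eq _ L
  · -- head?
    rw [hrev]
    rfl
  · -- length bound
    cases hlBc : lB with
    | nil =>
      have hkey := len_le_tvar G τ c (fun x y => (hemb x y).1) (lA.reverse ++ ([] : List V))
      have htvb : tvar τ (lA.reverse ++ ([] : List V)) ≤ c * (2 * ρ * lam) := by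
        rw [List.append_nil, htvarA]
        have h1 := hτL v hv m hmL
        have h2 : τ v - τ m ≤ |τ v - τ m| := le_abs_self _
        have h3 : (0:ℝ) ≤ c * ρ * lam := by positivity
        nlinarith
      exact le_of_mul_le_mul_left (le_trans hkey htvb) hc
    | cons y tB =>
      have hkey := len_le_tvar G τ c (fun x y => (hemb x y).1) (lA.reverse ++ y :: tB)
      have hyB : y ∈ B := (hmemlB y).mp (by rw [hlBc]; simp)
      have hyL : y ∈ L := hBL y hyB
      have hyv : ¬ τ y ≤ τ v := (Finset.mem_filter.mp hyB).2
      obtain ⟨z, hz⟩ : ∃ z, (y :: tB).getLast? = some z :=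
        ⟨(y :: tB).getLast (by simp), List.getLast?_eq_getLast _⟩
      have hzmem : z ∈ lB := by
        rw [hlBc]
        exact List.mem_of_mem_getLast? hz
      have hzL : z ∈ L := hBL z ((hmemlB z).mp hzmem)
      have hascB : (y :: tB).Pairwise (fun a b => τ a ≤ τ b) := by
        rw [← hlBc]
        exact Finset.pairwise_sort B r
      have htvB : tvar τ (y :: tB) = τ z - τ y := tvar_asc τ tB y z hascB hz
      have hshape : lA.reverse ++ y :: tB = tA.reverse ++ (m :: y :: tB) := by
        rw [hmA, List.reverse_cons, List.append_assoc]
        rfl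
      have htvb : tvar τ (lA.reverse ++ y :: tB) ≤ c * (2 * ρ * lam) := by
        rw [hshape, tvar_append]
        have hAm : tA.reverse ++ [m] = lA.reverse := by
          rw [hmA, List.reverse_cons]
        rw [hAm, htvarA, htvB]
        have hmy : |τ m - τ y| = τ y - τ m := by
          rw [abs_of_nonpos (by push_neg at hyv; linarith)]
          ring
        rw [hmy]
        have h1 := hτL v hv m hmL
        have h2 := hτL z hzL m hmL
        have h3 : τ v - τ m ≤ |τ v - τ m| := le_abs_self _
        have h4 : τ z - τ m ≤ |τ z - τ m| := le_abs_self _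
        nlinarith
      exact le_of_mul_le_mul_left (le_trans hkey htvb) hc
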